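/- Let f(y) := y²·(2−3y)/(1−2y). For every real m with 0 < m < 1/2, the following three conditions are equivalent: (i) (f(m) + 2m²(1−m)) / ((1−m) + f(m) + 2m(1−m)) ≤ m; (ii) f(m) ≤ m; (iii) m ≤ 1/3. (This is the chain of equivalences in the proof of Theorem 2(1): a pool of power m gains by unilaterally deviating from all-honest mining to insightful mining if and only if m > 1/3.) -/
import Mathlib


/-- `f(y) := y²·(2−3y)/(1−2y)`. -/
noncomputable def f (y : ℝ) : ℝ := y^2 * (2 - 3*y) / (1 - 2*y)

/-- For `0 < m < 1/2`, the three conditions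
(i) `(f(m)+2m²(1−m))/((1−m)+f(m)+2m(1−m)) ≤ m`, (ii) `f(m) ≤ m`, (iii) `m ≤ 1/3`
are equivalent. -/
theorem deviation_equivalences (m : ℝ) (h0 : 0 < m) (h1 : m < 1/2) :
    [(f m + 2*m^2*(1 - m)) / ((1 - m) + f m + 2*m*(1 - m)) ≤ m,
     f m ≤ m,
     m ≤ 1/3].TFAE := by
  have hd : (0:ℝ) < 1 - 2*m := by linarith
  have hf0 : 0 < f m := by
    unfold f
    exact div_pos (by nlinarith) hd
  have hD : 0 < (1 - m) + f m + 2*m*(1 - m) := by nlinarith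
  tfae_have 1 ↔ 2 := by
    rw [div_le_iff₀ hD]
    constructor
    · intro h; nlinarith [hf0]
    · intro h; nlinarith [hf0]
  tfae_have 2 ↔ 3 := by
    unfold f
    rw [div_le_iff₀ hd]
    constructor
    · intro h
      by_contra hc
      push_neg at hc
      nlinarith [mul_pos (mul_pos h0 (show (0:ℝ) < 3*m - 1 by linarith)) (show (0:ℝ) < 1 - m by linarith)]
    · intro h
      nlinarith [mul_nonneg (mul_nonneg h0.le (show (0:ℝ) ≤ 1 - 3*m by linarith)) (show (0:ℝ) ≤ 1 - m by linarith)]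
  tfae_finish
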